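/- Let g, p₀ be polynomials over a field K of characteristic zero, g nonzero, d ≥ 1, such that g(n) divides p₀(n)·lcm(g(n+1), ..., g(n+d)). Then for all sufficiently large k, g(n) divides ∏_{j=0}^{k-1} p₀(n+j). -/

import Mathlib

open Polynomial Finset

private lemma comp_dvd' {K : Type*} [CommSemiring K] {a b : K[X]} (r : K[X]) (h : a ∣ b) :
    a.comp r ∣ b.comp r := by
  obtain ⟨c, rfl⟩ := h
  exact ⟨c.comp r, by rw [mul_comp]⟩

private lemma eventually_coprime_shift {K : Type*} [Field K] [CharZero K]
    {g : K[X]} (hg : g ≠ 0) :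
    ∃ N : ℕ, ∀ j : ℕ, N ≤ j → IsCoprime g (g.comp (X + C (j : K))) := by
  classical
  set A := AlgebraicClosure K
  set φ := algebraMap K A with hφ
  have hgA : g.map φ ≠ 0 := (Polynomial.map_ne_zero_iff (algebraMap K A).injective).mpr hg
  set R := (g.map φ).roots with hR
  set T : Finset A := (R.toFinset ×ˢ R.toFinset).image (fun p => p.1 - p.2) with hT
  have hfin : ((Nat.cast : ℕ → A) ⁻¹' (T : Set A)).Finite :=
    Set.Finite.preimage (Set.injOn_of_injective Nat.cast_injective) T.finite_toSet
  obtain ⟨N, hN⟩ := hfin.bddAbove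
  refine ⟨N + 1, fun j hj => ?_⟩
  by_contra hcop
  set q := EuclideanDomain.gcd g (g.comp (X + C (j : K))) with hq
  have hqg : q ∣ g := EuclideanDomain.gcd_dvd_left _ _
  have hqs : q ∣ g.comp (X + C (j : K)) := EuclideanDomain.gcd_dvd_right _ _
  have hqu : ¬ IsUnit q := fun hu => hcop (EuclideanDomain.gcd_isUnit_iff.mp hu)
  have hq0 : q ≠ 0 := fun h0 => hg (by
    have := EuclideanDomain.gcd_eq_zero_iff.mp (hq ▸ h0)
    exact this.1)
  have hdeg : (q.map φ).degree ≠ 0 := by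
    rw [Polynomial.degree_map_eq_of_injective (algebraMap K A).injective]
    intro hd0
    exact hqu (Polynomial.isUnit_iff_degree_eq_zero.mpr hd0)
  obtain ⟨α, hα⟩ := IsAlgClosed.exists_root (q.map φ) hdeg
  have hαg : α ∈ R := by
    rw [hR, Polynomial.mem_roots hgA]
    exact hα.dvd (Polynomial.map_dvd φ hqg)
  have hαs : α + (j : A) ∈ R := by
    have h1 : (q.map φ) ∣ (g.comp (X + C (j : K))).map φ := Polynomial.map_dvd φ hqs
    have h2 : (g.comp (X + C (j : K))).map φ = (g.map φ).comp (X + C (j : A)) := by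
      rw [Polynomial.map_comp]
      simp [map_natCast C]
    have h3 : ((g.map φ).comp (X + C (j : A))).IsRoot α := by
      rw [← h2]
      exact hα.dvd h1
    rw [hR, Polynomial.mem_roots hgA]
    simpa [Polynomial.IsRoot, Polynomial.eval_comp, add_comm] using h3
  have hjT : (j : A) ∈ T := by
    rw [hT, Finset.mem_image]
    exact ⟨(α + (j : A), α), Finset.mem_product.mpr
      ⟨Multiset.mem_toFinset.mpr hαs, Multiset.mem_toFinset.mpr hαg⟩, by ring⟩
  have : j ≤ N := hN hjT
  omega

/-- For all sufficiently large `k`, the denominator `g` divides the product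
`∏_{j<k} p₀(n+j)`. -/
theorem divides_p0_product_eventually {K : Type*} [Field K] [CharZero K] [DecidableEq K]
    (d : ℕ) (hd : 1 ≤ d) (p₀ g : K[X]) (hg : g ≠ 0)
    (h : g ∣ p₀ * (Finset.Icc 1 d).lcm (fun j => g.comp (X + C (j : K)))) :
    ∃ K₁ : ℕ, ∀ k : ℕ, K₁ ≤ k → g ∣ ∏ j ∈ range k, p₀.comp (X + C (j : K)) := by
  classical
  obtain ⟨N, hN⟩ := eventually_coprime_shift hg
  set Q : ℕ → K[X] := fun k => (Finset.Ico k (k + d)).lcm (fun i => g.comp (X + C (i : K)))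
    with hQdef
  have hshift : ∀ m : ℕ, g.comp (X + C (m : K)) ∣ p₀.comp (X + C (m : K)) * Q (m + 1) := by
    intro m
    have h1 := comp_dvd' (X + C (m : K)) h
    rw [mul_comp] at h1
    refine h1.trans (mul_dvd_mul_left _ ?_)
    have key : (Finset.Icc 1 d).lcm (fun j => g.comp (X + C (j : K))) ∣
        (Q (m + 1)).comp (X - C (m : K)) := by
      apply Finset.lcm_dvd
      intro j hj
      have hjm : (m + j) ∈ Finset.Ico (m + 1) (m + 1 + d) := by
        simp only [Finset.mem_Icc] at hj
        simp only [Finset.mem_Ico]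
        omega
      have h2 : g.comp (X + C ((m + j : ℕ) : K)) ∣ Q (m + 1) := Finset.dvd_lcm hjm
      have h3 := comp_dvd' (X - C (m : K)) h2
      rw [comp_assoc] at h3
      have h4 : (X + C ((m + j : ℕ) : K)).comp (X - C (m : K)) = X + C (j : K) := by
        rw [add_comp, X_comp, C_comp, Nat.cast_add, C_add]
        ring
      rwa [h4] at h3
    have h5 := comp_dvd' (X + C (m : K)) key
    have h6 : (X - C (m : K)).comp (X + C (m : K)) = X := by
      rw [sub_comp, X_comp, C_comp, add_sub_cancel_right]
    rwa [comp_assoc, h6, comp_X] at h5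
  have main : ∀ k : ℕ,
      g ∣ (∏ j ∈ range (k + 1), p₀.comp (X + C (j : K))) * Q (k + 1) := by
    intro k
    induction k with
    | zero =>
      have h0 := hshift 0
      simpa using h0
    | succ k ih =>
      have step : Q (k + 1) ∣ p₀.comp (X + C ((k + 1 : ℕ) : K)) * Q (k + 2) := by
        apply Finset.lcm_dvd
        intro i hi
        simp only [Finset.mem_Ico] at hi
        rcases eq_or_lt_of_le hi.1 with heq | hlt
        · rw [← heq]
          exact hshift (k + 1)
        · refine dvd_mul_of_dvd_right (Finset.dvd_lcm ?_) _
          simp only [Finset.mem_Ico]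
          omega
      calc g ∣ (∏ j ∈ range (k + 1), p₀.comp (X + C (j : K))) * Q (k + 1) := ih
        _ ∣ (∏ j ∈ range (k + 2), p₀.comp (X + C (j : K))) * Q (k + 2) := by
            have h7 : (∏ j ∈ range (k + 2), p₀.comp (X + C (j : K))) * Q (k + 2)
                = (∏ j ∈ range (k + 1), p₀.comp (X + C (j : K))) *
                  (p₀.comp (X + C ((k + 1 : ℕ) : K)) * Q (k + 2)) := by
              rw [prod_range_succ, mul_assoc]
            rw [h7]
            exact mul_dvd_mul_left _ step
  refine ⟨N + 1, fun k hk => ?_⟩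
  obtain ⟨m, rfl⟩ : ∃ m, k = m + 1 := ⟨k - 1, by omega⟩
  have hmain := main m
  have hcop : IsCoprime g (Q (m + 1)) := by
    have hprod : IsCoprime g (∏ i ∈ Finset.Ico (m + 1) (m + 1 + d), g.comp (X + C (i : K))) :=
      IsCoprime.prod_right (fun i hi => hN i (by
        simp only [Finset.mem_Ico] at hi
        omega))
    exact hprod.of_isCoprime_of_dvd_right
      (Finset.lcm_dvd fun i hi => Finset.dvd_prod_of_mem _ hi)
  exact hcop.dvd_of_dvd_mul_right hmain
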